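/- arXiv:1707.00739 — 2 statements merged into one kernel-verified Lean document; each statement's English description precedes it below -/
import Mathlib

section
/- Let G be a group with commutator [a,b] = a⁻¹ b⁻¹ a b, and let α, β ∈ G. Define c₁ = [β,α] and c_{j+1} = [c_j, α]. Suppose the elements c_j (j ≥ 1) pairwise commute. Then for every natural number n ≥ 1, ∏_{i=1}^{n-1} [β, αⁱ] = ∏_{j=1}^{n-1} c_j^{C(n, j+1)}. -/
def gcomm {G : Type*} [Group G] (a b : G) : G := a⁻¹ * b⁻¹ * a * b

/-- list-range product equals finset-range product -/
lemma listProd_eq_finsetProd {M : Type*} [CommMonoid M] (f : ℕ → M) (n : ℕ) :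
    ((List.range n).map f).prod = ∏ i ∈ Finset.range n, f i := by
  induction n with
  | zero => simp
  | succ n ih =>
      rw [List.range_succ, Finset.prod_range_succ, List.map_append, List.prod_append, ih]
      simp

/-- hockey stick over range -/
lemma sum_range_choose' (n k : ℕ) : ∑ m ∈ Finset.range n, m.choose k = n.choose (k + 1) := by
  induction n with
  | zero => simp
  | succ n ih =>
      rw [Finset.sum_range_succ, ih, Nat.choose_succ_succ']
      omega

/-- iterated "conjugation" of a binomial-type sequence -/
lemma key_iter {H : Type*} [CommMonoid H] (d : ℕ → H) (f : H → H)
    (hmul : ∀ x y, f (x * y) = f x * f y)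
    (hd : ∀ j, f (d j) = d j * d (j + 1)) :
    ∀ m j, f^[m] (d j) = ∏ i ∈ Finset.range (m + 1), d (j + i) ^ (m.choose i) := by
  have hiter : ∀ m x y, f^[m] (x * y) = f^[m] x * f^[m] y := by
    intro m
    induction m with
    | zero => intro x y; simp
    | succ m ih =>
      intro x y
      rw [Function.iterate_succ_apply, Function.iterate_succ_apply,
        Function.iterate_succ_apply (f := f) (n := m) (x := y), hmul, ih]
  intro m
  induction m with
  | zero => intro j; simp
  | succ m ih =>
    intro j
    rw [Function.iterate_succ_apply, hd, hiter, ih, ih]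
    have h1 : ∏ i ∈ Finset.range (m + 1), d (j + i) ^ m.choose i
        = (∏ i ∈ Finset.range (m + 1), d (j + i + 1) ^ m.choose (i + 1)) * d j := by
      rw [Finset.prod_range_succ' (fun i => d (j + i) ^ m.choose i) m]
      rw [Finset.prod_range_succ]
      simp [Nat.choose_succ_self, ← add_assoc]
    have h2 : ∏ i ∈ Finset.range (m + 2), d (j + i) ^ (m + 1).choose i
        = ((∏ i ∈ Finset.range (m + 1), d (j + i + 1) ^ m.choose i) *
            ∏ i ∈ Finset.range (m + 1), d (j + i + 1) ^ m.choose (i + 1)) * d j := by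
      rw [Finset.prod_range_succ' (fun i => d (j + i) ^ (m + 1).choose i) (m + 1)]
      rw [← Finset.prod_mul_distrib]
      congr 1
      · refine Finset.prod_congr rfl fun i _ => ?_
        rw [Nat.choose_succ_succ, pow_add, ← add_assoc]
      · simp
    rw [h1, h2]
    have hadd : ∀ i, j + 1 + i = j + i + 1 := fun i => by omega
    simp only [hadd]
    rw [mul_comm ((∏ i ∈ Finset.range (m + 1), d (j + i + 1) ^ m.choose (i + 1)) * d j)]
    rw [← mul_assoc]

theorem stmt_7 {G : Type*} [Group G] (α β : G) (c : ℕ → G)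
    (hc1 : c 1 = gcomm β α)
    (hcrec : ∀ j : ℕ, 1 ≤ j → c (j + 1) = gcomm (c j) α)
    (hcomm : ∀ i j : ℕ, 1 ≤ i → 1 ≤ j → Commute (c i) (c j))
    (n : ℕ) (hn : 1 ≤ n) :
    ((List.range (n - 1)).map (fun i => gcomm β (α ^ (i + 1)))).prod =
      ((List.range (n - 1)).map (fun j => (c (j + 1)) ^ (Nat.choose n (j + 2)))).prod := by
  classical
  set S : Set G := Set.range (fun j : ℕ => c (j + 1)) with hS
  set H : Subgroup G := Subgroup.closure S with hHdef
  have hScomm : ∀ x ∈ S, ∀ y ∈ S, x * y = y * x := by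
    rintro x ⟨i, rfl⟩ y ⟨j, rfl⟩
    exact hcomm (i + 1) (j + 1) (by omega) (by omega)
  letI : CommGroup H := Subgroup.closureCommGroupOfComm hScomm
  have hmem : ∀ j : ℕ, c (j + 1) ∈ H := fun j => Subgroup.subset_closure ⟨j, rfl⟩
  set d : ℕ → H := fun j => ⟨c (j + 1), hmem j⟩ with hd
  -- conjugation by α
  have hconjc : ∀ j : ℕ, α⁻¹ * c (j + 1) * α = c (j + 1) * c (j + 2) := by
    intro j
    have := hcrec (j + 1) (by omega)
    rw [gcomm] at this
    rw [show j + 1 + 1 = j + 2 from rfl] at this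
    rw [this]; group
  have hconj_mem : ∀ x ∈ H, α⁻¹ * x * α ∈ H := by
    intro x hx
    induction hx using Subgroup.closure_induction with
    | mem y hy =>
      obtain ⟨j, rfl⟩ := hy
      rw [hconjc j]
      exact mul_mem (hmem j) (hmem (j + 1))
    | one => simpa using one_mem H
    | mul y z _ _ hy hz =>
      have : α⁻¹ * (y * z) * α = (α⁻¹ * y * α) * (α⁻¹ * z * α) := by group
      rw [this]; exact mul_mem hy hz
    | inv y _ hy =>
      have : α⁻¹ * y⁻¹ * α = (α⁻¹ * y * α)⁻¹ := by group
      rw [this]; exact inv_mem hy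
  set f : H → H := fun x => ⟨α⁻¹ * (x : G) * α, hconj_mem x x.2⟩ with hf
  have hfmul : ∀ x y : H, f (x * y) = f x * f y := by
    intro x y; apply Subtype.ext; show α⁻¹ * (↑x * ↑y) * α = (α⁻¹ * ↑x * α) * (α⁻¹ * ↑y * α)
    group
  have hfd : ∀ j, f (d j) = d j * d (j + 1) := by
    intro j; apply Subtype.ext; exact hconjc j
  have hiter_coe : ∀ (m : ℕ) (x : H), ((f^[m] x : H) : G) = (α ^ m)⁻¹ * (x : G) * α ^ m := by
    intro m
    induction m with
    | zero => intro x; simp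
    | succ m ih =>
      intro x
      rw [Function.iterate_succ_apply', hf]
      show α⁻¹ * ((f^[m] x : H) : G) * α = _
      rw [ih x]
      rw [pow_succ]
      group
  have key := key_iter d f hfmul hfd
  -- main claim: gcomm β (α ^ m) in terms of d
  have claim : ∀ m : ℕ, gcomm β (α ^ m) =
      ((∏ i ∈ Finset.range m, d i ^ (m.choose (i + 1)) : H) : G) := by
    intro m
    induction m with
    | zero => simp [gcomm]
    | succ m ih =>
      have hsplit : gcomm β (α ^ (m + 1)) =
          gcomm β (α ^ m) * ((α ^ m)⁻¹ * gcomm β α * α ^ m) := by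
        simp only [gcomm]
        rw [pow_succ]; group
      have hc1' : gcomm β α = ((d 0 : H) : G) := by rw [hd]; simpa using hc1.symm
      rw [hsplit, ih, hc1', ← hiter_coe m (d 0), key m 0]
      rw [← Subgroup.coe_mul]
      congr 1
      have hext : (∏ i ∈ Finset.range m, d i ^ (m.choose (i + 1)) : H)
          = ∏ i ∈ Finset.range (m + 1), d i ^ (m.choose (i + 1)) := by
        rw [Finset.prod_range_succ, Nat.choose_succ_self, pow_zero, mul_one]
      rw [hext, ← Finset.prod_mul_distrib]
      refine Finset.prod_congr rfl fun i _ => ?_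
      rw [Nat.zero_add, ← pow_add, Nat.choose_succ_succ]
      congr 1
      exact Nat.add_comm _ _
  -- assemble
  have hL : ((List.range (n - 1)).map (fun i => gcomm β (α ^ (i + 1)))).prod =
      ((∏ i ∈ Finset.range (n - 1),
        ∏ j ∈ Finset.range (i + 1), d j ^ ((i + 1).choose (j + 1)) : H) : G) := by
    have : (fun i => gcomm β (α ^ (i + 1))) = fun i =>
        (H.subtype) (∏ j ∈ Finset.range (i + 1), d j ^ ((i + 1).choose (j + 1))) := by
      funext i; rw [claim (i + 1)]; rfl
    rw [this]
    rw [show (fun i => H.subtype (∏ j ∈ Finset.range (i + 1), d j ^ ((i + 1).choose (j + 1))))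
        = (⇑H.subtype ∘ fun i => ∏ j ∈ Finset.range (i + 1), d j ^ ((i + 1).choose (j + 1)))
        from rfl]
    rw [← List.map_map, List.prod_hom, listProd_eq_finsetProd]
    rfl
  have hR : ((List.range (n - 1)).map (fun j => (c (j + 1)) ^ (Nat.choose n (j + 2)))).prod =
      ((∏ j ∈ Finset.range (n - 1), d j ^ (n.choose (j + 2)) : H) : G) := by
    have : (fun j => (c (j + 1)) ^ (Nat.choose n (j + 2))) = fun j =>
        (H.subtype) (d j ^ (n.choose (j + 2))) := by
      funext j; rfl
    rw [this]
    rw [show (fun j => H.subtype (d j ^ (n.choose (j + 2))))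
        = (⇑H.subtype ∘ fun j => d j ^ (n.choose (j + 2))) from rfl]
    rw [← List.map_map, List.prod_hom, listProd_eq_finsetProd]
    rfl
  rw [hL, hR]
  congr 1
  -- now a pure computation in H
  have hpad : ∀ i ∈ Finset.range (n - 1),
      (∏ j ∈ Finset.range (i + 1), d j ^ ((i + 1).choose (j + 1)))
      = ∏ j ∈ Finset.range (n - 1), d j ^ ((i + 1).choose (j + 1)) := by
    intro i hi
    simp only [Finset.mem_range] at hi
    refine Finset.prod_subset (Finset.range_subset_range.mpr (by omega)) ?_
    intro j _ hj
    simp only [Finset.mem_range, not_lt] at hj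
    rw [Nat.choose_eq_zero_of_lt (by omega), pow_zero]
  rw [Finset.prod_congr rfl hpad, Finset.prod_comm]
  refine Finset.prod_congr rfl fun j _ => ?_
  rw [Finset.prod_pow_eq_pow_sum]
  congr 1
  have hrw : ∑ i ∈ Finset.range (n - 1), (i + 1).choose (j + 1)
      = ∑ m ∈ Finset.range n, m.choose (j + 1) := by
    have hn' : n = (n - 1) + 1 := by omega
    rw [hn', Finset.sum_range_succ' (fun m => m.choose (j + 1)) (n - 1)]
    simp
  rw [hrw, sum_range_choose']
end

section
/- Let G be a group with commutator [a,b] = a⁻¹ b⁻¹ a b, and let β, α, f ∈ G. Suppose that β commutes with [β,αⁱ] for all i ≥ 1 and the [β,αⁱ] pairwise commute. Then for any n ≥ 1 and any j with 1 ≤ j ≤ n, if βⁿ = 1 and each [β,αⁱ] has order dividing n, then (α·β)ⁿ = αⁿ · ∏_{i=1}^{n-1}[β,αⁱ]. -/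
lemma key_14 {G : Type*} [Group G] (β α : G)
    (h1 : ∀ i : ℕ, 1 ≤ i → Commute β (gcomm β (α ^ i)))
    (h2 : ∀ i j : ℕ, 1 ≤ i → 1 ≤ j → Commute (gcomm β (α ^ i)) (gcomm β (α ^ j))) :
    ∀ m : ℕ, (α * β) ^ (m + 1) =
      α ^ (m + 1) * β ^ (m + 1) *
        ((List.range m).map (fun i => gcomm β (α ^ (i + 1)))).prod := by
  intro m
  induction m with
  | zero => simp
  | succ m ih =>
    set c := gcomm β (α ^ (m + 1)) with hc
    set P := ((List.range m).map (fun i => gcomm β (α ^ (i + 1)))).prod with hPdef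
    have hbc : Commute β c := h1 _ (by omega)
    have hP : c * P = P * c := by
      refine (Commute.list_prod_right _ _ ?_).eq
      intro y hy
      simp only [List.mem_map, List.mem_range] at hy
      obtain ⟨i, _, rfl⟩ := hy
      exact h2 _ _ (by omega) (by omega)
    have hmove : β * α ^ (m + 1) = α ^ (m + 1) * (β * c) := by
      simp only [hc, gcomm]
      group
    have hprodsucc : ((List.range (m + 1)).map (fun i => gcomm β (α ^ (i + 1)))).prod
        = P * c := by
      rw [List.range_succ, List.map_append, List.prod_append]
      simp [hPdef, hc]
    rw [hprodsucc]
    calc (α * β) ^ (m + 1 + 1) = (α * β) * (α * β) ^ (m + 1) := by rw [pow_succ']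
    _ = (α * β) * (α ^ (m + 1) * β ^ (m + 1) * P) := by rw [ih]
    _ = α * (β * α ^ (m + 1)) * β ^ (m + 1) * P := by group
    _ = α * (α ^ (m + 1) * (β * c)) * β ^ (m + 1) * P := by rw [hmove]
    _ = α ^ (m + 1 + 1) * β * (c * β ^ (m + 1)) * P := by group
    _ = α ^ (m + 1 + 1) * β * (β ^ (m + 1) * c) * P := by
        rw [((hbc.pow_left (m + 1)).symm).eq]
    _ = α ^ (m + 1 + 1) * β ^ (m + 1 + 1) * (c * P) := by group
    _ = α ^ (m + 1 + 1) * β ^ (m + 1 + 1) * (P * c) := by rw [hP]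

theorem stmt_14 {G : Type*} [Group G] (β α f : G)
    (h1 : ∀ i : ℕ, 1 ≤ i → Commute β (gcomm β (α ^ i)))
    (h2 : ∀ i j : ℕ, 1 ≤ i → 1 ≤ j → Commute (gcomm β (α ^ i)) (gcomm β (α ^ j)))
    (n j : ℕ) (hn : 1 ≤ n) (hj1 : 1 ≤ j) (hj2 : j ≤ n)
    (hβ : β ^ n = 1) (hord : ∀ i : ℕ, 1 ≤ i → (gcomm β (α ^ i)) ^ n = 1) :
    (α * β) ^ n = α ^ n * ((List.range (n - 1)).map (fun i => gcomm β (α ^ (i + 1)))).prod := by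
  obtain ⟨m, rfl⟩ : ∃ m, n = m + 1 := ⟨n - 1, by omega⟩
  have := key_14 β α h1 h2 m
  simpa [hβ] using this
end
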